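/- Let w be one of (−1,1)ᵀ, (1,−2,1)ᵀ, (−1,1,1,−1)ᵀ with length d, let λ > 0, let A ⊆ {1,…,d} be nonempty with |A| = t, and let f = (f^{(1)},…,f^{(d)}) ∈ 𝒳^d. For x^a = (x^{(j)})_{j∈A} ∈ 𝒳^t let x denote the matrix with columns x^{(j)} for j ∈ A and fixed columns f^{(j)} for j ∉ A, and consider ℰ(x^a) = ½ Σ_{j∈A} d_𝒳(x^{(j)},f^{(j)})² + λ D(x;w). Assume the generic condition that (f_S w)_i ∉ 2πℤ − π for every cyclic component i = 1,…,m. Then ℰ has the unique minimizer x̂^a = (f^a − m s (w^a)ᵀ)_𝒳, where w^a = (w_j)_{j∈A}, the vector (fw)_𝒳 ∈ ℝ^{m+n} has components ((f_S w)_i)_{2π} for i ≤ m and (f_ℝ w)_{i−m} for i > m, s = (fw)_𝒳/‖(fw)_𝒳‖ if (fw)_𝒳 ≠ 0 and s = 0 otherwise, and m = min{λ, ‖(fw)_𝒳‖/‖w^a‖²}. -/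

import Mathlib

open scoped Classical

noncomputable section

/-- `(t)_{2π}`: the unique element of `[-π, π)` with `t - (t)_{2π} ∈ 2πℤ`. -/
def wrap (t : ℝ) : ℝ := t - 2 * Real.pi * (⌊(t + Real.pi) / (2 * Real.pi)⌋ : ℤ)

/-- A point of `𝒳 = (𝕊¹)^m × ℝⁿ`, identified with `[-π,π)^m × ℝⁿ`. -/
abbrev Pt (m n : ℕ) := (Fin m → ℝ) × (Fin n → ℝ)

/-- Distance on `𝒳`. -/
def dX {m n : ℕ} (x y : Pt m n) : ℝ :=
  Real.sqrt ((∑ i, (wrap (x.1 i - y.1 i)) ^ 2) + ∑ i, (x.2 i - y.2 i) ^ 2)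

/-- Combined absolute finite difference of `x ∈ 𝒳^d` with respect to the weight `w`. -/
def Dw {m n : ℕ} (d : ℕ) (w : Fin d → ℝ) (x : Fin d → Pt m n) : ℝ :=
  Real.sqrt
    ((sInf {r : ℝ | ∃ k : Fin m → Fin d → ℤ,
        r = ∑ i, (∑ j, ((x j).1 i + 2 * Real.pi * (k i j : ℝ)) * w j) ^ 2}) +
      ∑ i, (∑ j, (x j).2 i * w j) ^ 2)

namespace ProxAux

local notation "π" => Real.pi

lemma two_pi_pos : 0 < 2 * π := by positivity

lemma wrap_mem (t : ℝ) : wrap t ∈ Set.Ico (-π) π := by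
  unfold wrap
  have h1 := Int.floor_le ((t + π) / (2 * π))
  have h2 := Int.lt_floor_add_one ((t + π) / (2 * π))
  rw [le_div_iff₀ two_pi_pos] at h1
  rw [div_lt_iff₀ two_pi_pos] at h2
  constructor
  · nlinarith
  · nlinarith

lemma wrap_sub (t : ℝ) : ∃ z : ℤ, t = wrap t + 2 * π * z :=
  ⟨⌊(t + π) / (2 * π)⌋, by unfold wrap; ring⟩

lemma wrap_add_int (t : ℝ) (z : ℤ) : wrap (t + 2 * π * z) = wrap t := by
  unfold wrap
  have hp : (2 : ℝ) * π ≠ 0 := ne_of_gt two_pi_pos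
  have : (t + 2 * π * z + π) / (2 * π) = (t + π) / (2 * π) + z := by
    field_simp; ring
  rw [this, Int.floor_add_intCast]
  push_cast; ring

lemma wrap_eq_self {t : ℝ} (h : t ∈ Set.Ico (-π) π) : wrap t = t := by
  unfold wrap
  have : ⌊(t + π) / (2 * π)⌋ = 0 := by
    rw [Int.floor_eq_zero_iff]
    constructor
    · apply div_nonneg _ (le_of_lt two_pi_pos); linarith [h.1]
    · rw [div_lt_one two_pi_pos]; linarith [h.2]
  rw [this]; push_cast; ring

lemma abs_wrap_le (t : ℝ) : |wrap t| ≤ π := by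
  have h := wrap_mem t
  rw [abs_le]
  exact ⟨h.1, le_of_lt h.2⟩

lemma sq_wrap_le (t : ℝ) (z : ℤ) : wrap t ^ 2 ≤ (t + 2 * π * z) ^ 2 := by
  obtain ⟨p, hp⟩ := wrap_sub t
  have ht : t + 2 * π * z = wrap t + 2 * π * ((p + z : ℤ) : ℝ) := by
    push_cast; linarith
  rw [ht]
  rcases eq_or_ne (p + z) 0 with h | h
  · rw [h]; norm_num
  · set q : ℝ := ((p + z : ℤ) : ℝ) with hq
    have h1 : (1 : ℝ) ≤ |q| := by
      rw [hq, ← Int.cast_abs]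
      exact_mod_cast Int.one_le_abs h
    have h2 := abs_wrap_le t
    have h3 := neg_abs_le (q * wrap t)
    have h4 : |q * wrap t| = |q| * |wrap t| := abs_mul _ _
    have hπ := Real.pi_pos
    have e1 : -(|q| * π) ≤ q * wrap t := by
      have : |q| * |wrap t| ≤ |q| * π := mul_le_mul_of_nonneg_left h2 (abs_nonneg q)
      nlinarith
    have e2 : |q| ≤ q ^ 2 := by
      have : |q| * 1 ≤ |q| * |q| := mul_le_mul_of_nonneg_left h1 (abs_nonneg q)
      nlinarith [sq_abs q]
    have e3 : 0 ≤ π ^ 2 * (q ^ 2 - |q|) := mul_nonneg (sq_nonneg π) (by linarith)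
    have e4 : π * (-(|q| * π)) ≤ π * (q * wrap t) := mul_le_mul_of_nonneg_left e1 hπ.le
    nlinarith [e3, e4]

lemma wrap_wrap_sub {a : ℝ} (t : ℝ) (h : |a| < π) : wrap (wrap (t - a) - t) = -a := by
  obtain ⟨z, hz⟩ := wrap_sub (t - a)
  have h1 : wrap (t - a) - t = -a + 2 * π * ((-z : ℤ) : ℝ) := by push_cast; linarith
  rw [h1, wrap_add_int]
  apply wrap_eq_self
  have := abs_lt.1 h
  constructor
  · linarith
  · linarith

lemma wrap_reconstruct {t : ℝ} (s : ℝ) (h : t ∈ Set.Ico (-π) π) :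
    wrap (s + wrap (t - s)) = t := by
  obtain ⟨z, hz⟩ := wrap_sub (t - s)
  have : s + wrap (t - s) = t + 2 * π * (-z : ℤ) := by push_cast; linarith
  rw [this, wrap_add_int, wrap_eq_self h]

lemma sInf_eq_wrap (m d : ℕ) (w : Fin d → ℝ) (hwint : ∀ j, ∃ z : ℤ, w j = z)
    (j₀ : Fin d) (hj₀ : w j₀ = 1 ∨ w j₀ = -1) (a : Fin m → Fin d → ℝ) :
    sInf {r : ℝ | ∃ k : Fin m → Fin d → ℤ,
        r = ∑ i, (∑ j, (a i j + 2 * π * (k i j : ℝ)) * w j) ^ 2}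
      = ∑ i, wrap (∑ j, a i j * w j) ^ 2 := by
  have hexp : ∀ k : Fin m → Fin d → ℤ, ∀ i,
      (∑ j, (a i j + 2 * π * (k i j : ℝ)) * w j)
        = (∑ j, a i j * w j) + 2 * π * ∑ j, (k i j : ℝ) * w j := by
    intro k i
    rw [Finset.mul_sum, ← Finset.sum_add_distrib]
    apply Finset.sum_congr rfl
    intro j _; ring
  apply IsLeast.csInf_eq
  constructor
  · -- membership
    set ε : ℤ := if w j₀ = 1 then 1 else -1 with hε
    set K : Fin m → Fin d → ℤ :=
      fun i j => if j = j₀ then (-⌊((∑ j', a i j' * w j') + π) / (2 * π)⌋) * ε else 0 with hK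
    refine ⟨K, ?_⟩
    apply Finset.sum_congr rfl
    intro i _
    rw [hexp]
    have hsum : (∑ j, (K i j : ℝ) * w j)
        = -⌊((∑ j', a i j' * w j') + π) / (2 * π)⌋ := by
      rw [Finset.sum_eq_single j₀]
      · rw [hK]; simp only [if_pos rfl]
        rcases hj₀ with h | h
        · rw [hε, if_pos h, h]; push_cast; ring
        · rw [hε, if_neg (show ¬ (w j₀ = 1) by rw [h]; norm_num), h]; push_cast; ring
      · intro b _ hb; rw [hK]; simp only [if_neg hb]; simp
      · intro hb; exact absurd (Finset.mem_univ j₀) hb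
    rw [hsum]
    unfold wrap
    push_cast
    ring
  · rintro r ⟨k, rfl⟩
    apply Finset.sum_le_sum
    intro i _
    rw [hexp]
    obtain ⟨Z, hZ⟩ : ∃ Z : ℤ, (Z : ℝ) = ∑ j, (k i j : ℝ) * w j := by
      choose ζ hζ using hwint
      refine ⟨∑ j, k i j * ζ j, ?_⟩
      push_cast
      exact Finset.sum_congr rfl fun j _ => by rw [hζ j]
    rw [← hZ]
    exact sq_wrap_le _ Z

def Vfun (lam W N : ℝ) : ℝ := min lam (N / W) * N - (min lam (N / W)) ^ 2 * W / 2

lemma coreA {E : Type*} [NormedAddCommGroup E] [InnerProductSpace ℝ E] {d : ℕ}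
    (A : Finset (Fin d)) (w : Fin d → ℝ) (lam : ℝ) (hlam : 0 < lam)
    (hW : 0 < ∑ j ∈ A, w j ^ 2) (γ : E) (z : Fin d → E) :
    Vfun lam (∑ j ∈ A, w j ^ 2) ‖γ‖
      ≤ (1 / 2) * ∑ j ∈ A, ‖z j‖ ^ 2 + lam * ‖γ + ∑ j ∈ A, w j • z j‖ := by
  set W := ∑ j ∈ A, w j ^ 2 with hWdef
  set S := ∑ j ∈ A, ‖z j‖ ^ 2 with hSdef
  set u := ∑ j ∈ A, w j • z j with hudef
  set N := ‖γ‖ with hNdef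
  set μ := min lam (N / W) with hμdef
  have hS0 : 0 ≤ S := Finset.sum_nonneg fun j _ => sq_nonneg _
  have hμ0 : 0 ≤ μ := le_min hlam.le (div_nonneg (norm_nonneg _) hW.le)
  have hμlam : μ ≤ lam := min_le_left _ _
  have hμW : μ * W ≤ N := by
    have h := min_le_right lam (N / W)
    calc μ * W ≤ (N / W) * W := by nlinarith
      _ = N := by field_simp
  -- Cauchy-Schwarz
  have hcs : ‖u‖ ^ 2 ≤ W * S := by
    have h1 : ‖u‖ ≤ ∑ j ∈ A, |w j| * ‖z j‖ := by
      refine (norm_sum_le _ _).trans ?_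
      apply Finset.sum_le_sum
      intro j _
      rw [norm_smul, Real.norm_eq_abs]
    have h2 : (∑ j ∈ A, |w j| * ‖z j‖) ^ 2 ≤ (∑ j ∈ A, |w j| ^ 2) * ∑ j ∈ A, ‖z j‖ ^ 2 :=
      Finset.sum_mul_sq_le_sq_mul_sq A _ _
    have h3 : (∑ j ∈ A, |w j| ^ 2) = W := by
      apply Finset.sum_congr rfl; intro j _; rw [sq_abs]
    have h4 : 0 ≤ ∑ j ∈ A, |w j| * ‖z j‖ :=
      Finset.sum_nonneg fun j _ => mul_nonneg (abs_nonneg _) (norm_nonneg _)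
    calc ‖u‖ ^ 2 ≤ (∑ j ∈ A, |w j| * ‖z j‖) ^ 2 := by nlinarith [norm_nonneg u]
      _ ≤ W * S := by rw [← h3]; exact h2
  have h1 : μ * ‖u‖ ≤ S / 2 + μ ^ 2 * W / 2 := by
    nlinarith [sq_nonneg (μ * W - ‖u‖), norm_nonneg u]
  have h2 : μ * (N - ‖u‖) ≤ lam * ‖γ + u‖ := by
    rcases le_or_gt ‖u‖ N with h | h
    · have hg : N - ‖u‖ ≤ ‖γ + u‖ := by
        have := norm_sub_le (γ + u) u
        simp only [add_sub_cancel_right] at this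
        linarith
      have : μ * (N - ‖u‖) ≤ lam * (N - ‖u‖) := by nlinarith
      nlinarith
    · have : μ * (N - ‖u‖) ≤ 0 := mul_nonpos_of_nonneg_of_nonpos hμ0 (by linarith)
      have := mul_nonneg hlam.le (norm_nonneg (γ + u))
      linarith
  have : Vfun lam W N = μ * N - μ ^ 2 * W / 2 := rfl
  rw [this]
  linarith

lemma Vfun_lt {lam W : ℝ} (hlam : 0 < lam) (hW : 0 < W) {N₁ N₂ : ℝ}
    (h0 : 0 ≤ N₁) (h : N₁ < N₂) : Vfun lam W N₁ < Vfun lam W N₂ := by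
  unfold Vfun
  set μ₁ := min lam (N₁ / W) with hμ₁
  set μ₂ := min lam (N₂ / W) with hμ₂
  have hμ₁0 : 0 ≤ μ₁ := le_min hlam.le (div_nonneg h0 hW.le)
  have hμ₂0 : 0 < μ₂ := lt_min hlam (div_pos (h0.trans_lt h) hW)
  have h12 : μ₁ ≤ μ₂ := min_le_min le_rfl (by gcongr)
  have hμ₁W : μ₁ * W ≤ N₁ := by
    have hh := min_le_right lam (N₁ / W)
    calc μ₁ * W ≤ (N₁ / W) * W := by nlinarith
      _ = N₁ := by field_simp
  have hμ₂W : μ₂ * W ≤ N₂ := by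
    have hh := min_le_right lam (N₂ / W)
    calc μ₂ * W ≤ (N₂ / W) * W := by nlinarith
      _ = N₂ := by field_simp
  rcases eq_or_lt_of_le h0 with h0' | h0'
  · have hμ₁' : μ₁ = 0 := by rw [hμ₁, ← h0']; simp [hlam.le]
    rw [hμ₁']
    nlinarith [mul_le_mul_of_nonneg_left hμ₂W hμ₂0.le]
  · have hμ₁pos : 0 < μ₁ := lt_min hlam (div_pos h0' hW)
    have fact1 : 0 ≤ (μ₂ - μ₁) * (2 * N₂ - (μ₂ + μ₁) * W) := by
      apply mul_nonneg (by linarith)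
      nlinarith
    have fact2 : 0 < μ₁ * (N₂ - N₁) := mul_pos hμ₁pos (by linarith)
    nlinarith [fact1, fact2]

lemma coreB {E : Type*} [NormedAddCommGroup E] [InnerProductSpace ℝ E] {d : ℕ}
    (A : Finset (Fin d)) (w : Fin d → ℝ) (lam : ℝ) (hlam : 0 < lam)
    (hW : 0 < ∑ j ∈ A, w j ^ 2) (γ : E) (zh : Fin d → E)
    (heq : (1 / 2) * ∑ j ∈ A, ‖zh j‖ ^ 2 + lam * ‖γ + ∑ j ∈ A, w j • zh j‖
        = Vfun lam (∑ j ∈ A, w j ^ 2) ‖γ‖)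
    (z : Fin d → E) :
    Vfun lam (∑ j ∈ A, w j ^ 2) ‖γ‖ + (1 / 4) * ∑ j ∈ A, ‖z j - zh j‖ ^ 2
      ≤ (1 / 2) * ∑ j ∈ A, ‖z j‖ ^ 2 + lam * ‖γ + ∑ j ∈ A, w j • z j‖ := by
  set zm : Fin d → E := fun j => (2 : ℝ)⁻¹ • (z j + zh j) with hzm
  have hmid := coreA A w lam hlam hW γ zm
  -- midpoint of linear images
  have hsm : (2 : ℝ) • (γ + ∑ j ∈ A, w j • zm j)
      = (γ + ∑ j ∈ A, w j • z j) + (γ + ∑ j ∈ A, w j • zh j) := by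
    have h1 : (2 : ℝ) • ∑ j ∈ A, w j • zm j
        = ∑ j ∈ A, w j • z j + ∑ j ∈ A, w j • zh j := by
      rw [Finset.smul_sum, ← Finset.sum_add_distrib]
      apply Finset.sum_congr rfl
      intro j _
      show (2 : ℝ) • (w j • ((2 : ℝ)⁻¹ • (z j + zh j))) = w j • z j + w j • zh j
      module
    rw [smul_add, h1, two_smul]
    abel
  have hnm : (2 : ℝ) * ‖γ + ∑ j ∈ A, w j • zm j‖
      ≤ ‖γ + ∑ j ∈ A, w j • z j‖ + ‖γ + ∑ j ∈ A, w j • zh j‖ := by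
    have := norm_add_le (γ + ∑ j ∈ A, w j • z j) (γ + ∑ j ∈ A, w j • zh j)
    rw [← hsm, norm_smul] at this
    simpa using this
  have hSm : (4 : ℝ) * ∑ j ∈ A, ‖zm j‖ ^ 2
      = 2 * ∑ j ∈ A, ‖z j‖ ^ 2 + 2 * ∑ j ∈ A, ‖zh j‖ ^ 2 - ∑ j ∈ A, ‖z j - zh j‖ ^ 2 := by
    have hper : ∀ j ∈ A, (4 : ℝ) * ‖zm j‖ ^ 2
        = 2 * ‖z j‖ ^ 2 + 2 * ‖zh j‖ ^ 2 - ‖z j - zh j‖ ^ 2 := by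
      intro j _
      have hpar := parallelogram_law_with_norm ℝ (z j) (zh j)
      have hn : ‖zm j‖ = 2⁻¹ * ‖z j + zh j‖ := by
        show ‖(2 : ℝ)⁻¹ • (z j + zh j)‖ = _
        rw [norm_smul]
        norm_num
      rw [hn]
      nlinarith [hpar]
    calc (4 : ℝ) * ∑ j ∈ A, ‖zm j‖ ^ 2 = ∑ j ∈ A, 4 * ‖zm j‖ ^ 2 := by rw [Finset.mul_sum]
      _ = ∑ j ∈ A, (2 * ‖z j‖ ^ 2 + 2 * ‖zh j‖ ^ 2 - ‖z j - zh j‖ ^ 2) :=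
          Finset.sum_congr rfl hper
      _ = _ := by
          rw [Finset.sum_sub_distrib, Finset.sum_add_distrib, ← Finset.mul_sum, ← Finset.mul_sum]
  have hl := mul_le_mul_of_nonneg_left hnm hlam.le
  linarith
lemma Dw_reduce (m n d : ℕ) (w : Fin d → ℝ) (hwint : ∀ j, ∃ z : ℤ, w j = z)
    (j₀ : Fin d) (hj₀ : w j₀ = 1 ∨ w j₀ = -1)
    (A : Finset (Fin d)) (f y : Fin d → Pt m n) (hyf : ∀ j ∉ A, y j = f j) :
    Dw d w y = Real.sqrt
      ((∑ i, wrap (wrap (∑ j, (f j).1 i * w j)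
            + ∑ j ∈ A, w j * wrap ((y j).1 i - (f j).1 i)) ^ 2)
        + ∑ i, ((∑ j, (f j).2 i * w j)
            + ∑ j ∈ A, w j * ((y j).2 i - (f j).2 i)) ^ 2) := by
  choose ζ hζ using hwint
  unfold Dw
  rw [sInf_eq_wrap m d w (fun j => ⟨ζ j, hζ j⟩) j₀ hj₀ (fun i j => (y j).1 i)]
  have hsplit : ∀ (g : Fin d → ℝ) (e : Fin d → ℝ), (∀ j ∉ A, g j = e j) →
      ∑ j, g j * w j = ∑ j, e j * w j + ∑ j ∈ A, w j * (g j - e j) := by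
    intro g e hge
    have h0 : ∑ j ∈ A, w j * (g j - e j) = ∑ j, w j * (g j - e j) := by
      apply Finset.sum_subset (Finset.subset_univ A)
      intro j _ hj
      rw [hge j hj]; ring
    rw [h0, ← Finset.sum_add_distrib]
    apply Finset.sum_congr rfl; intro j _; ring
  congr 1
  congr 1
  · apply Finset.sum_congr rfl
    intro i _
    congr 1
    choose q hq using fun j => wrap_sub ((y j).1 i - (f j).1 i)
    obtain ⟨p, hp⟩ := wrap_sub (∑ j, (f j).1 i * w j)
    have hTB := hsplit (fun j => (y j).1 i) (fun j => (f j).1 i)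
      (fun j hj => by simp only [hyf j hj])
    have hterm : ∀ j ∈ A, w j * ((y j).1 i - (f j).1 i)
        = w j * wrap ((y j).1 i - (f j).1 i) + 2 * π * ((q j * ζ j : ℤ) : ℝ) := by
      intro j _
      rw [hζ j]
      push_cast
      linear_combination ((ζ j : ℝ)) * hq j
    have hsum2 : ∑ j ∈ A, w j * ((y j).1 i - (f j).1 i)
        = (∑ j ∈ A, w j * wrap ((y j).1 i - (f j).1 i))
          + 2 * π * ∑ j ∈ A, (q j : ℝ) * (ζ j : ℝ) := by
      rw [Finset.sum_congr rfl hterm, Finset.sum_add_distrib, ← Finset.mul_sum]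
      push_cast
      ring
    have key : (∑ j, (y j).1 i * w j)
        = (wrap (∑ j, (f j).1 i * w j)
            + ∑ j ∈ A, w j * wrap ((y j).1 i - (f j).1 i))
          + 2 * π * ((p + ∑ j ∈ A, q j * ζ j : ℤ) : ℝ) := by
      rw [hTB, hsum2]
      push_cast
      linear_combination hp
    rw [key, wrap_add_int]
  · apply Finset.sum_congr rfl
    intro i _
    congr 1
    have := hsplit (fun j => (y j).2 i) (fun j => (f j).2 i) (fun j hj => by simp only [hyf j hj])
    simpa using this

def vec (m n : ℕ) (g : Fin m → ℝ) (h : Fin n → ℝ) : EuclideanSpace ℝ (Fin m ⊕ Fin n) :=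
  WithLp.toLp 2 (Sum.elim g h)

lemma vec_add (m n : ℕ) (g g' : Fin m → ℝ) (h h' : Fin n → ℝ) :
    vec m n g h + vec m n g' h' = vec m n (g + g') (h + h') := by
  ext i
  cases i <;> rfl

lemma vec_smul (m n : ℕ) (a : ℝ) (g : Fin m → ℝ) (h : Fin n → ℝ) :
    a • vec m n g h = vec m n (a • g) (a • h) := by
  ext i
  cases i <;> rfl

lemma vec_zero (m n : ℕ) : (0 : EuclideanSpace ℝ (Fin m ⊕ Fin n)) = vec m n 0 0 := by
  ext i
  cases i <;> rfl

lemma vec_sub (m n : ℕ) (g g' : Fin m → ℝ) (h h' : Fin n → ℝ) :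
    vec m n g h - vec m n g' h' = vec m n (g - g') (h - h') := by
  ext i
  cases i <;> rfl

lemma vec_sum {d : ℕ} (m n : ℕ) (A : Finset (Fin d)) (g : Fin d → Fin m → ℝ)
    (h : Fin d → Fin n → ℝ) :
    ∑ j ∈ A, vec m n (g j) (h j) = vec m n (∑ j ∈ A, g j) (∑ j ∈ A, h j) := by
  induction A using Finset.induction_on with
  | empty => simp [vec_zero]
  | insert _ _ hnot ih =>
      rw [Finset.sum_insert hnot, Finset.sum_insert hnot, Finset.sum_insert hnot, ih, vec_add]

lemma vec_wsum {d : ℕ} (m n : ℕ) (A : Finset (Fin d)) (w : Fin d → ℝ)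
    (g : Fin d → Fin m → ℝ) (h : Fin d → Fin n → ℝ) :
    ∑ j ∈ A, w j • vec m n (g j) (h j)
      = vec m n (fun i => ∑ j ∈ A, w j * g j i) (fun i => ∑ j ∈ A, w j * h j i) := by
  induction A using Finset.induction_on with
  | empty => simp only [Finset.sum_empty]; exact vec_zero m n
  | insert _ _ hnot ih =>
      rw [Finset.sum_insert hnot, ih, vec_smul, vec_add]
      congr 1 <;> funext i <;> cases i <;>
        simp [vec, Finset.sum_insert hnot]

lemma vec_norm (m n : ℕ) (g : Fin m → ℝ) (h : Fin n → ℝ) :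
    ‖vec m n g h‖ = Real.sqrt ((∑ i, g i ^ 2) + ∑ i, h i ^ 2) := by
  rw [EuclideanSpace.norm_eq]
  congr 1
  rw [Fintype.sum_sum_type]
  congr 1 <;> · apply Finset.sum_congr rfl; intro i _; rw [Real.norm_eq_abs, sq_abs]; rfl

lemma vec_norm_sq (m n : ℕ) (g : Fin m → ℝ) (h : Fin n → ℝ) :
    ‖vec m n g h‖ ^ 2 = (∑ i, g i ^ 2) + ∑ i, h i ^ 2 := by
  rw [vec_norm, Real.sq_sqrt]
  positivity

end ProxAux

open ProxAux

set_option maxHeartbeats 2000000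

/-- **Theorem 3.3 (proximal mappings with fixed components, generic case).**
For a weight `w ∈ {(-1,1), (1,-2,1), (-1,1,1,-1)}`, a nonempty active set `A`, data
`f ∈ 𝒳^d` and `λ > 0`, if no cyclic component of `f_S w` is an odd multiple of `π`, then the
functional `ℰ(x^a) = ½ Σ_{j∈A} d_𝒳(x^{(j)},f^{(j)})² + λ D(x;w)` (columns outside `A` fixed
to `f`) has the unique minimizer `x̂^a = (f^a − m s (w^a)ᵀ)_𝒳`. -/
theorem prox_with_fixed_components_generic
    (m n d : ℕ) (w : Fin d → ℝ)
    (hw : List.ofFn w = [(-1 : ℝ), 1] ∨ List.ofFn w = [(1 : ℝ), -2, 1]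
        ∨ List.ofFn w = [(-1 : ℝ), 1, 1, -1])
    (lam : ℝ) (hlam : 0 < lam)
    (A : Finset (Fin d)) (hA : A.Nonempty)
    (f : Fin d → Pt m n)
    (hf : ∀ j i, (f j).1 i ∈ Set.Ico (-Real.pi) Real.pi)
    (hgen : ∀ (i : Fin m) (z : ℤ),
      (∑ j, (f j).1 i * w j) ≠ 2 * Real.pi * (z : ℝ) - Real.pi)
    (En : (Fin d → Pt m n) → ℝ)
    (hEn : ∀ x, En x = (1 / 2) * (∑ j ∈ A, dX (x j) (f j) ^ 2) + lam * Dw d w x)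
    (Nv : ℝ)
    (hNv : Nv = Real.sqrt ((∑ i, (wrap (∑ j, (f j).1 i * w j)) ^ 2)
        + ∑ i, (∑ j, (f j).2 i * w j) ^ 2))
    (sS : Fin m → ℝ) (sR : Fin n → ℝ)
    (hsS : sS = if Nv = 0 then 0 else fun i => wrap (∑ j, (f j).1 i * w j) / Nv)
    (hsR : sR = if Nv = 0 then 0 else fun i => (∑ j, (f j).2 i * w j) / Nv)
    (mv : ℝ) (hmv : mv = min lam (Nv / ∑ j ∈ A, (w j) ^ 2))
    (xhat : Fin d → Pt m n)
    (hxhat : ∀ j, xhat j = if j ∈ A then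
        ((fun i => wrap ((f j).1 i - mv * sS i * w j)),
         (fun i => (f j).2 i - mv * sR i * w j))
      else f j) :
    ((∀ j ∉ A, xhat j = f j) ∧
      (∀ j i, (xhat j).1 i ∈ Set.Ico (-Real.pi) Real.pi)) ∧
    (∀ x : Fin d → Pt m n,
      (∀ j ∉ A, x j = f j) →
      (∀ j i, (x j).1 i ∈ Set.Ico (-Real.pi) Real.pi) →
      x ≠ xhat → En xhat < En x) := by
  classical
  have hπ := Real.pi_pos
  -- ============ basic facts about the weight vector ============
  have hwvals : ∀ j, w j = -1 ∨ w j = 1 ∨ w j = -2 := by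
    intro j
    have hmem : w j ∈ List.ofFn w := by rw [List.mem_ofFn]; exact ⟨j, rfl⟩
    rcases hw with h | h | h <;> rw [h] at hmem <;> simp at hmem <;> tauto
  have hd : 0 < d := by
    rcases hw with h | h | h <;> (have := congrArg List.length h; simp at this; omega)
  obtain ⟨j₀, hj₀⟩ : ∃ j₀ : Fin d, w j₀ = 1 ∨ w j₀ = -1 := by
    refine ⟨⟨0, hd⟩, ?_⟩
    have hlt : 0 < (List.ofFn w).length := by simpa using hd
    have hget := List.getElem_ofFn (f := w) (i := 0) hlt
    rcases hw with h | h | h <;> simp only [h] at hget <;> norm_num at hget <;>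
      first
        | exact Or.inl hget | exact Or.inr hget
        | exact Or.inl hget.symm | exact Or.inr hget.symm
  have hwint : ∀ j, ∃ z : ℤ, w j = (z : ℝ) := by
    intro j
    rcases hwvals j with h | h | h
    · exact ⟨-1, by rw [h]; norm_num⟩
    · exact ⟨1, by rw [h]; norm_num⟩
    · exact ⟨-2, by rw [h]; norm_num⟩
  have hwsq : ∀ j, 1 ≤ w j ^ 2 := by
    intro j; rcases hwvals j with h | h | h <;> rw [h] <;> norm_num
  have habsw : ∀ j, |w j| ≤ w j ^ 2 := by
    intro j; rcases hwvals j with h | h | h <;> rw [h] <;> norm_num [abs_of_nonpos, abs_of_nonneg]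
  have hWpos : 0 < ∑ j ∈ A, w j ^ 2 :=
    Finset.sum_pos (fun j _ => lt_of_lt_of_le one_pos (hwsq j)) hA
  have hWj : ∀ j ∈ A, w j ^ 2 ≤ ∑ j ∈ A, w j ^ 2 := fun j hj =>
    Finset.single_le_sum (f := fun j => w j ^ 2) (fun j _ => sq_nonneg (w j)) hj
  -- ============ basic facts about the data ============
  have hclt : ∀ i, |wrap (∑ j, (f j).1 i * w j)| < Real.pi := by
    intro i
    have hm := wrap_mem (∑ j, (f j).1 i * w j)
    rw [abs_lt]
    refine ⟨?_, hm.2⟩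
    rcases lt_or_eq_of_le hm.1 with h | h
    · exact h
    · exfalso
      obtain ⟨z, hz⟩ := wrap_sub (∑ j, (f j).1 i * w j)
      exact hgen i z (by rw [hz, ← h]; ring)
  have hNv0 : 0 ≤ Nv := by rw [hNv]; exact Real.sqrt_nonneg _
  have hNvsq : Nv ^ 2 = (∑ i, (wrap (∑ j, (f j).1 i * w j)) ^ 2)
      + ∑ i, (∑ j, (f j).2 i * w j) ^ 2 := by
    rw [hNv, Real.sq_sqrt (by positivity)]
  have hmv0 : 0 ≤ mv := by
    rw [hmv]; exact le_min hlam.le (div_nonneg hNv0 hWpos.le)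
  have hmvlam : mv ≤ lam := by rw [hmv]; exact min_le_left _ _
  have hmvNW : mv ≤ Nv / ∑ j ∈ A, w j ^ 2 := by rw [hmv]; exact min_le_right _ _
  have hmvW : mv * ∑ j ∈ A, w j ^ 2 ≤ Nv := by
    calc mv * ∑ j ∈ A, w j ^ 2 ≤ (Nv / ∑ j ∈ A, w j ^ 2) * ∑ j ∈ A, w j ^ 2 := by nlinarith
      _ = Nv := by field_simp
  -- if Nv = 0, the data vector vanishes
  have hNvzero : Nv = 0 → (∀ i, wrap (∑ j, (f j).1 i * w j) = 0)
      ∧ (∀ i, (∑ j, (f j).2 i * w j) = 0) := by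
    intro h0
    rw [h0] at hNvsq
    have h1 : (∑ i, (wrap (∑ j, (f j).1 i * w j)) ^ 2) = 0 ∧
        (∑ i, (∑ j, (f j).2 i * w j) ^ 2) = 0 := by
      constructor <;> nlinarith [Finset.sum_nonneg (fun i (_ : i ∈ Finset.univ) =>
          sq_nonneg (wrap (∑ j, (f j).1 i * w j))),
        Finset.sum_nonneg (fun i (_ : i ∈ Finset.univ) =>
          sq_nonneg (∑ j, (f j).2 i * w j))]
    constructor
    · intro i
      have := (Finset.sum_eq_zero_iff_of_nonneg
        (fun i (_ : i ∈ Finset.univ) => sq_nonneg (wrap (∑ j, (f j).1 i * w j)))).1 h1.1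
          i (Finset.mem_univ i)
      exact pow_eq_zero_iff (two_ne_zero) |>.1 this
    · intro i
      have := (Finset.sum_eq_zero_iff_of_nonneg
        (fun i (_ : i ∈ Finset.univ) => sq_nonneg (∑ j, (f j).2 i * w j))).1 h1.2
          i (Finset.mem_univ i)
      exact pow_eq_zero_iff (two_ne_zero) |>.1 this
  have hmvNv0 : Nv = 0 → mv = 0 := by
    intro h0
    rw [hmv, h0]
    simp [hlam.le]
  -- key componentwise identities for s
  have hcomp1 : ∀ i, Nv * sS i = wrap (∑ j, (f j).1 i * w j) := by
    intro i
    rcases eq_or_ne Nv 0 with h0 | h0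
    · rw [hsS, if_pos h0, h0, (hNvzero h0).1 i]; simp
    · rw [hsS, if_neg h0]; field_simp
  have hcomp2 : ∀ i, Nv * sR i = (∑ j, (f j).2 i * w j) := by
    intro i
    rcases eq_or_ne Nv 0 with h0 | h0
    · rw [hsR, if_pos h0, h0, (hNvzero h0).2 i]; simp
    · rw [hsR, if_neg h0]; field_simp
  -- bound needed to unwrap xhat
  have hbound : ∀ j ∈ A, ∀ i, |mv * sS i * w j| < Real.pi := by
    intro j hj i
    rcases eq_or_ne Nv 0 with h0 | h0
    · rw [hsS, if_pos h0]
      simpa using hπ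
    · have hNvpos : 0 < Nv := lt_of_le_of_ne hNv0 (Ne.symm h0)
      rw [hsS, if_neg h0]
      have habs : |mv * (wrap (∑ j, (f j).1 i * w j) / Nv) * w j|
          = mv * |wrap (∑ j, (f j).1 i * w j)| * |w j| / Nv := by
        rw [abs_mul, abs_mul, abs_div, abs_of_nonneg hmv0, abs_of_pos hNvpos]
        ring
      rw [habs]
      have h2 : mv * |w j| ≤ Nv := by
        have h3 : |w j| ≤ ∑ j ∈ A, w j ^ 2 := le_trans (habsw j) (hWj j hj)
        calc mv * |w j| ≤ mv * ∑ j ∈ A, w j ^ 2 := by nlinarith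
          _ ≤ Nv := hmvW
      have h4 : mv * |wrap (∑ j, (f j).1 i * w j)| * |w j| / Nv
          ≤ |wrap (∑ j, (f j).1 i * w j)| := by
        rw [div_le_iff₀ hNvpos]
        calc mv * |wrap (∑ j, (f j).1 i * w j)| * |w j|
            = |wrap (∑ j, (f j).1 i * w j)| * (mv * |w j|) := by ring
          _ ≤ |wrap (∑ j, (f j).1 i * w j)| * Nv := by
              exact mul_le_mul_of_nonneg_left h2 (abs_nonneg _)
      exact lt_of_le_of_lt h4 (hclt i)
  -- ============ part 1 ============
  have hxhatfix : ∀ j ∉ A, xhat j = f j := by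
    intro j hj; rw [hxhat j, if_neg hj]
  have hxhatIco : ∀ j i, (xhat j).1 i ∈ Set.Ico (-Real.pi) Real.pi := by
    intro j i
    rw [hxhat j]
    by_cases hj : j ∈ A
    · rw [if_pos hj]; exact wrap_mem _
    · rw [if_neg hj]; exact hf j i
  refine ⟨⟨hxhatfix, hxhatIco⟩, ?_⟩
  intro x hxfix hxIco hne
  -- ============ vector setup ============
  obtain ⟨Zv, hZv⟩ : ∃ Zv' : (Fin d → Pt m n) → Fin d → EuclideanSpace ℝ (Fin m ⊕ Fin n),
      Zv' = fun y j => vec m n (fun i => wrap ((y j).1 i - (f j).1 i))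
        (fun i => (y j).2 i - (f j).2 i) := ⟨_, rfl⟩
  obtain ⟨Sv, hSv⟩ : ∃ Sv' : EuclideanSpace ℝ (Fin m ⊕ Fin n),
      Sv' = vec m n sS sR := ⟨_, rfl⟩
  obtain ⟨zh, hzh⟩ : ∃ zh' : Fin d → EuclideanSpace ℝ (Fin m ⊕ Fin n),
      zh' = fun j => (-(mv * w j)) • Sv := ⟨_, rfl⟩
  obtain ⟨Γ, hΓ⟩ : ∃ Γ' : EuclideanSpace ℝ (Fin m ⊕ Fin n),
      Γ' = vec m n (fun i => wrap (∑ j, (f j).1 i * w j))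
        (fun i => ∑ j, (f j).2 i * w j) := ⟨_, rfl⟩
  have hΓnorm : ‖Γ‖ = Nv := by rw [hΓ, vec_norm, hNv]
  -- energy in vector form
  have hEnform : ∀ y : Fin d → Pt m n, (∀ j ∉ A, y j = f j) →
      En y = (1 / 2) * ∑ j ∈ A, ‖Zv y j‖ ^ 2
        + lam * Real.sqrt
          ((∑ i, wrap (wrap (∑ j, (f j).1 i * w j)
              + ∑ j ∈ A, w j * wrap ((y j).1 i - (f j).1 i)) ^ 2)
            + ∑ i, ((∑ j, (f j).2 i * w j)
              + ∑ j ∈ A, w j * ((y j).2 i - (f j).2 i)) ^ 2) := by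
    intro y hy
    rw [hEn y, Dw_reduce m n d w hwint j₀ hj₀ A f y hy]
    congr 1
    congr 1
    apply Finset.sum_congr rfl
    intro j _
    rw [hZv]
    simp only []
    rw [vec_norm_sq]
    simp only [dX]
    rw [Real.sq_sqrt (by positivity)]
  -- linear image of the Zv-sum
  have husum : ∀ y : Fin d → Pt m n, ∑ j ∈ A, w j • Zv y j
      = vec m n (fun i => ∑ j ∈ A, w j * wrap ((y j).1 i - (f j).1 i))
        (fun i => ∑ j ∈ A, w j * ((y j).2 i - (f j).2 i)) := by
    intro y
    rw [hZv]
    exact vec_wsum m n A w _ _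
  -- ============ the value at zh ============
  have hΓSv : Γ = Nv • Sv := by
    rw [hΓ, hSv, vec_smul]
    ext i
    cases i with
    | inl i =>
        simp only [vec, Sum.elim_inl, Pi.smul_apply, smul_eq_mul]
        exact (hcomp1 i).symm
    | inr i =>
        simp only [vec, Sum.elim_inr, Pi.smul_apply, smul_eq_mul]
        exact (hcomp2 i).symm
  have hSvnorm : Nv ≠ 0 → ‖Sv‖ = 1 := by
    intro h0
    rw [hSv, vec_norm, hsS, if_neg h0, hsR, if_neg h0]
    have e1 : ∑ i, (wrap (∑ j, (f j).1 i * w j) / Nv) ^ 2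
        = (∑ i, wrap (∑ j, (f j).1 i * w j) ^ 2) / Nv ^ 2 := by
      rw [Finset.sum_div]; exact Finset.sum_congr rfl fun i _ => by rw [div_pow]
    have e2 : ∑ i, ((∑ j, (f j).2 i * w j) / Nv) ^ 2
        = (∑ i, (∑ j, (f j).2 i * w j) ^ 2) / Nv ^ 2 := by
      rw [Finset.sum_div]; exact Finset.sum_congr rfl fun i _ => by rw [div_pow]
    rw [e1, e2, ← add_div, ← hNvsq, div_self (pow_ne_zero 2 h0), Real.sqrt_one]
  have hzhnormsq : ∀ j, ‖zh j‖ ^ 2 = mv ^ 2 * w j ^ 2 * ‖Sv‖ ^ 2 := by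
    intro j
    rw [hzh]
    simp only []
    rw [norm_smul, mul_pow, Real.norm_eq_abs, sq_abs]
    ring
  have hzhsum : ∑ j ∈ A, w j • zh j = (-(mv * ∑ j ∈ A, w j ^ 2)) • Sv := by
    rw [hzh]
    simp only []
    have e1 : ∀ j ∈ A, w j • (-(mv * w j)) • Sv = (-(mv * w j ^ 2)) • Sv := by
      intro j _
      rw [smul_smul]
      congr 1
      ring
    rw [Finset.sum_congr rfl e1, ← Finset.sum_smul]
    congr 1
    rw [Finset.mul_sum, ← Finset.sum_neg_distrib]
  have hΓzh : Γ + ∑ j ∈ A, w j • zh j = (Nv - mv * ∑ j ∈ A, w j ^ 2) • Sv := by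
    rw [hΓSv, hzhsum, ← add_smul]
    congr 1
  have hGzh : (1 / 2) * ∑ j ∈ A, ‖zh j‖ ^ 2 + lam * ‖Γ + ∑ j ∈ A, w j • zh j‖
      = Vfun lam (∑ j ∈ A, w j ^ 2) Nv := by
    have hVdef : Vfun lam (∑ j ∈ A, w j ^ 2) Nv
        = mv * Nv - mv ^ 2 * (∑ j ∈ A, w j ^ 2) / 2 := by
      unfold Vfun
      rw [← hmv]
    have hsum1 : ∑ j ∈ A, ‖zh j‖ ^ 2 = mv ^ 2 * ‖Sv‖ ^ 2 * ∑ j ∈ A, w j ^ 2 := by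
      rw [Finset.mul_sum]
      exact Finset.sum_congr rfl fun j _ => by rw [hzhnormsq j]; ring
    have hnorm2 : ‖Γ + ∑ j ∈ A, w j • zh j‖
        = (Nv - mv * ∑ j ∈ A, w j ^ 2) * ‖Sv‖ := by
      rw [hΓzh, norm_smul, Real.norm_eq_abs, abs_of_nonneg (by linarith [hmvW])]
    rcases eq_or_ne Nv 0 with h0 | h0
    · have hmv' : mv = 0 := hmvNv0 h0
      rw [hsum1, hnorm2, hVdef, hmv', h0]
      ring
    · have hS1 : ‖Sv‖ = 1 := hSvnorm h0
      rw [hsum1, hnorm2, hVdef, hS1]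
      rcases le_total lam (Nv / ∑ j ∈ A, w j ^ 2) with hc | hc
      · have : mv = lam := by rw [hmv]; exact min_eq_left hc
        rw [this]; ring
      · have hmv' : mv = Nv / ∑ j ∈ A, w j ^ 2 := by rw [hmv]; exact min_eq_right hc
        have : mv * ∑ j ∈ A, w j ^ 2 = Nv := by
          rw [hmv']; field_simp
        rw [show Nv - mv * ∑ j ∈ A, w j ^ 2 = 0 from by rw [this]; ring]
        rw [show mv * Nv = mv ^ 2 * ∑ j ∈ A, w j ^ 2 from by rw [← this]; ring]
        ring
  -- ============ Zv at xhat ============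
  have hwrapxhat : ∀ j ∈ A, ∀ i,
      wrap ((xhat j).1 i - (f j).1 i) = -(mv * sS i * w j) := by
    intro j hj i
    rw [hxhat j, if_pos hj]
    exact wrap_wrap_sub ((f j).1 i) (hbound j hj i)
  have hlinxhat : ∀ j ∈ A, ∀ i,
      (xhat j).2 i - (f j).2 i = -(mv * sR i * w j) := by
    intro j hj i
    rw [hxhat j, if_pos hj]
    ring
  have hZxhat : ∀ j ∈ A, Zv xhat j = zh j := by
    intro j hj
    rw [hZv, hzh]
    simp only []
    rw [hSv, vec_smul]
    ext i
    cases i with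
    | inl i =>
        simp only [vec, Sum.elim_inl, Pi.smul_apply, smul_eq_mul]
        rw [hwrapxhat j hj i]; ring
    | inr i =>
        simp only [vec, Sum.elim_inr, Pi.smul_apply, smul_eq_mul]
        rw [hlinxhat j hj i]; ring
  have hUhat : ∀ i, ∑ j ∈ A, w j * wrap ((xhat j).1 i - (f j).1 i)
      = -(mv * sS i) * ∑ j ∈ A, w j ^ 2 := by
    intro i
    have e1 : ∀ j ∈ A, w j * wrap ((xhat j).1 i - (f j).1 i)
        = (-(mv * sS i)) * w j ^ 2 := by
      intro j hj
      rw [hwrapxhat j hj i]; ring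
    rw [Finset.sum_congr rfl e1, ← Finset.mul_sum]
  have hURhat : ∀ i, ∑ j ∈ A, w j * ((xhat j).2 i - (f j).2 i)
      = -(mv * sR i) * ∑ j ∈ A, w j ^ 2 := by
    intro i
    have e1 : ∀ j ∈ A, w j * ((xhat j).2 i - (f j).2 i)
        = (-(mv * sR i)) * w j ^ 2 := by
      intro j hj
      rw [hlinxhat j hj i]; ring
    rw [Finset.sum_congr rfl e1, ← Finset.mul_sum]
  have hargxhat : ∀ i, |(Nv - mv * ∑ j ∈ A, w j ^ 2) * sS i| < Real.pi := by
    intro i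
    rcases eq_or_ne Nv 0 with h0 | h0
    · rw [hsS, if_pos h0]
      simpa using hπ
    · have hNvpos : 0 < Nv := lt_of_le_of_ne hNv0 (Ne.symm h0)
      rw [hsS, if_neg h0]
      have habs : |(Nv - mv * ∑ j ∈ A, w j ^ 2) * (wrap (∑ j, (f j).1 i * w j) / Nv)|
          = (Nv - mv * ∑ j ∈ A, w j ^ 2) * |wrap (∑ j, (f j).1 i * w j)| / Nv := by
        rw [abs_mul, abs_div, abs_of_nonneg (by linarith [hmvW]), abs_of_pos hNvpos]
        ring
      rw [habs]
      have h4 : (Nv - mv * ∑ j ∈ A, w j ^ 2) * |wrap (∑ j, (f j).1 i * w j)| / Nv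
          ≤ |wrap (∑ j, (f j).1 i * w j)| := by
        rw [div_le_iff₀ hNvpos]
        have hfac : Nv - mv * ∑ j ∈ A, w j ^ 2 ≤ Nv := by
          linarith [mul_nonneg hmv0 hWpos.le]
        calc (Nv - mv * ∑ j ∈ A, w j ^ 2) * |wrap (∑ j, (f j).1 i * w j)|
            = |wrap (∑ j, (f j).1 i * w j)| * (Nv - mv * ∑ j ∈ A, w j ^ 2) := by ring
          _ ≤ |wrap (∑ j, (f j).1 i * w j)| * Nv :=
              mul_le_mul_of_nonneg_left hfac (abs_nonneg _)
      exact lt_of_le_of_lt h4 (hclt i)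
  have hre : ∀ i, wrap (wrap (∑ j, (f j).1 i * w j)
      + ∑ j ∈ A, w j * wrap ((xhat j).1 i - (f j).1 i))
      = (Nv - mv * ∑ j ∈ A, w j ^ 2) * sS i := by
    intro i
    rw [hUhat i,
      show wrap (∑ j, (f j).1 i * w j) + -(mv * sS i) * ∑ j ∈ A, w j ^ 2
        = (Nv - mv * ∑ j ∈ A, w j ^ 2) * sS i from by rw [← hcomp1 i]; ring]
    apply wrap_eq_self
    have := abs_lt.1 (hargxhat i)
    exact ⟨by linarith, by linarith⟩
  have hreR : ∀ i, (∑ j, (f j).2 i * w j)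
      + ∑ j ∈ A, w j * ((xhat j).2 i - (f j).2 i)
      = (Nv - mv * ∑ j ∈ A, w j ^ 2) * sR i := by
    intro i
    rw [hURhat i, ← hcomp2 i]
    ring
  have hEnxhat : En xhat = Vfun lam (∑ j ∈ A, w j ^ 2) Nv := by
    rw [hEnform xhat hxhatfix]
    rw [show (∑ j ∈ A, ‖Zv xhat j‖ ^ 2) = ∑ j ∈ A, ‖zh j‖ ^ 2 from
      Finset.sum_congr rfl (fun j hj => by rw [hZxhat j hj])]
    have hkey : Real.sqrt
        ((∑ i, wrap (wrap (∑ j, (f j).1 i * w j)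
            + ∑ j ∈ A, w j * wrap ((xhat j).1 i - (f j).1 i)) ^ 2)
          + ∑ i, ((∑ j, (f j).2 i * w j)
            + ∑ j ∈ A, w j * ((xhat j).2 i - (f j).2 i)) ^ 2)
        = ‖Γ + ∑ j ∈ A, w j • zh j‖ := by
      rw [hΓzh, hSv, vec_smul, vec_norm]
      congr 2
      · apply Finset.sum_congr rfl
        intro i _
        rw [hre i]
        simp
      · apply Finset.sum_congr rfl
        intro i _
        rw [hreR i]
        simp
    rw [hkey, hGzh]
  -- ============ analysis at x ============
  have hEnx := hEnform x hxfix
  obtain ⟨K, hK⟩ : ∃ K : Fin m → ℤ, ∀ i,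
      wrap (wrap (∑ j, (f j).1 i * w j) + ∑ j ∈ A, w j * wrap ((x j).1 i - (f j).1 i))
      = (wrap (∑ j, (f j).1 i * w j) + ∑ j ∈ A, w j * wrap ((x j).1 i - (f j).1 i))
        - 2 * Real.pi * ((K i : ℤ) : ℝ) :=
    ⟨fun i => ⌊((wrap (∑ j, (f j).1 i * w j)
        + ∑ j ∈ A, w j * wrap ((x j).1 i - (f j).1 i)) + Real.pi) / (2 * Real.pi)⌋,
      fun i => rfl⟩
  have hvec : Real.sqrt
      ((∑ i, wrap (wrap (∑ j, (f j).1 i * w j)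
          + ∑ j ∈ A, w j * wrap ((x j).1 i - (f j).1 i)) ^ 2)
        + ∑ i, ((∑ j, (f j).2 i * w j)
          + ∑ j ∈ A, w j * ((x j).2 i - (f j).2 i)) ^ 2)
      = ‖vec m n (fun i => wrap (∑ j, (f j).1 i * w j) - 2 * Real.pi * ((K i : ℤ) : ℝ))
          (fun i => ∑ j, (f j).2 i * w j) + ∑ j ∈ A, w j • Zv x j‖ := by
    rw [husum x, vec_add, vec_norm]
    congr 2
    apply Finset.sum_congr rfl
    intro i _
    rw [hK i]
    simp only [Pi.add_apply]
    ring
  rw [hEnx, hvec, hEnxhat]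
  by_cases hK0 : ∀ i, K i = 0
  · -- principal sheet: use the strict quadratic lower bound
    have hΓeq : vec m n (fun i => wrap (∑ j, (f j).1 i * w j)
          - 2 * Real.pi * ((K i : ℤ) : ℝ))
        (fun i => ∑ j, (f j).2 i * w j) = Γ := by
      rw [hΓ]
      ext i
      cases i with
      | inl i =>
          simp only [vec, Sum.elim_inl]
          rw [hK0 i]
          norm_num
      | inr i => simp only [vec, Sum.elim_inr]
    rw [hΓeq]
    have hcb := coreB A w lam hlam hWpos Γ zh (by rw [hΓnorm]; exact hGzh) (Zv x)
    rw [hΓnorm] at hcb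
    have hnontriv : ∃ j ∈ A, Zv x j ≠ zh j := by
      by_contra hcon
      push_neg at hcon
      apply hne
      funext j
      by_cases hj : j ∈ A
      · have hzeq := hcon j hj
        rw [hZv] at hzeq
        simp only [] at hzeq
        rw [hxhat j, if_pos hj]
        refine Prod.ext ?_ ?_
        · funext i
          have hcg := congrArg
            (fun v : EuclideanSpace ℝ (Fin m ⊕ Fin n) => v (Sum.inl i)) hzeq
          simp only [vec, Sum.elim_inl] at hcg
          have h2 : zh j (Sum.inl i) = -(mv * w j) * sS i := by
            rw [hzh]
            simp only []
            rw [hSv]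
            simp [vec, PiLp.smul_apply]
          rw [h2] at hcg
          have hxv : wrap ((f j).1 i + wrap ((x j).1 i - (f j).1 i)) = (x j).1 i :=
            wrap_reconstruct ((f j).1 i) (hxIco j i)
          show (x j).1 i = wrap ((f j).1 i - mv * sS i * w j)
          rw [← hxv, hcg]
          congr 1
          ring
        · funext i
          have hcg := congrArg
            (fun v : EuclideanSpace ℝ (Fin m ⊕ Fin n) => v (Sum.inr i)) hzeq
          simp only [vec, Sum.elim_inr] at hcg
          have h2 : zh j (Sum.inr i) = -(mv * w j) * sR i := by
            rw [hzh]
            simp only []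
            rw [hSv]
            simp [vec, PiLp.smul_apply]
          rw [h2] at hcg
          show (x j).2 i = (f j).2 i - mv * sR i * w j
          linarith [hcg]
      · rw [hxfix j hj, hxhat j, if_neg hj]
    obtain ⟨j₁, hj₁A, hj₁⟩ := hnontriv
    have hpos : 0 < ∑ j ∈ A, ‖Zv x j - zh j‖ ^ 2 := by
      refine Finset.sum_pos' (fun j _ => sq_nonneg _) ⟨j₁, hj₁A, ?_⟩
      have hne0 : Zv x j₁ - zh j₁ ≠ 0 := sub_ne_zero.2 hj₁
      have := norm_pos_iff.2 hne0
      positivity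
    linarith [hcb, hpos]
  · -- nonprincipal sheet: strictly larger data norm
    push_neg at hK0
    obtain ⟨i₀, hi₀⟩ := hK0
    have hca := coreA A w lam hlam hWpos
      (vec m n (fun i => wrap (∑ j, (f j).1 i * w j) - 2 * Real.pi * ((K i : ℤ) : ℝ))
        (fun i => ∑ j, (f j).2 i * w j)) (Zv x)
    have hperi : ∀ i, K i ≠ 0 →
        wrap (∑ j, (f j).1 i * w j) ^ 2
          < (wrap (∑ j, (f j).1 i * w j) - 2 * Real.pi * ((K i : ℤ) : ℝ)) ^ 2 := by
      intro i hKi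
      have h1 : (1 : ℝ) ≤ |((K i : ℤ) : ℝ)| := by
        rw [← Int.cast_abs]
        exact_mod_cast Int.one_le_abs hKi
      have h2 := hclt i
      have e1 : ((K i : ℤ) : ℝ) * wrap (∑ j, (f j).1 i * w j)
          ≤ |((K i : ℤ) : ℝ)| * |wrap (∑ j, (f j).1 i * w j)| := by
        calc ((K i : ℤ) : ℝ) * wrap (∑ j, (f j).1 i * w j)
            ≤ |((K i : ℤ) : ℝ) * wrap (∑ j, (f j).1 i * w j)| := le_abs_self _
          _ = _ := abs_mul _ _
      have e2 : |((K i : ℤ) : ℝ)| * |wrap (∑ j, (f j).1 i * w j)|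
          < |((K i : ℤ) : ℝ)| * Real.pi :=
        mul_lt_mul_of_pos_left h2 (by linarith)
      have e3 : |((K i : ℤ) : ℝ)| * Real.pi ≤ ((K i : ℤ) : ℝ) ^ 2 * Real.pi := by
        have h4 : |((K i : ℤ) : ℝ)| ≤ ((K i : ℤ) : ℝ) ^ 2 := by
          nlinarith [sq_abs ((K i : ℤ) : ℝ)]
        exact mul_le_mul_of_nonneg_right h4 hπ.le
      have e4 : 0 < ((K i : ℤ) : ℝ) ^ 2 * Real.pi
          - ((K i : ℤ) : ℝ) * wrap (∑ j, (f j).1 i * w j) := by linarith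
      nlinarith [mul_pos hπ e4]
    have hgt : Nv < ‖vec m n (fun i => wrap (∑ j, (f j).1 i * w j)
        - 2 * Real.pi * ((K i : ℤ) : ℝ)) (fun i => ∑ j, (f j).2 i * w j)‖ := by
      have hsq : Nv ^ 2 < ‖vec m n (fun i => wrap (∑ j, (f j).1 i * w j)
          - 2 * Real.pi * ((K i : ℤ) : ℝ)) (fun i => ∑ j, (f j).2 i * w j)‖ ^ 2 := by
        rw [vec_norm_sq, hNvsq]
        have hle : ∀ i ∈ Finset.univ, wrap (∑ j, (f j).1 i * w j) ^ 2
            ≤ (wrap (∑ j, (f j).1 i * w j) - 2 * Real.pi * ((K i : ℤ) : ℝ)) ^ 2 := by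
          intro i _
          by_cases hKi : K i = 0
          · rw [hKi]; norm_num
          · exact le_of_lt (hperi i hKi)
        have := Finset.sum_lt_sum hle ⟨i₀, Finset.mem_univ i₀, hperi i₀ hi₀⟩
        linarith
      nlinarith [norm_nonneg (vec m n (fun i => wrap (∑ j, (f j).1 i * w j)
        - 2 * Real.pi * ((K i : ℤ) : ℝ)) (fun i => ∑ j, (f j).2 i * w j)), hNv0]
    have hVlt := Vfun_lt hlam hWpos hNv0 hgt
    linarith [hca]
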